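/- For every k ∈ {1,…,n} one has C(λ_k) = |g| · A′(λ_k) · ( φ_k/m + f_k ), where f_k = c_{m−1}/(m·λ_k) − (|g|/(m·λ_k))·Σ_{ℓ≠k} λ_k^m/(λ_ℓ^m − λ_k^m). In particular, if |g| ≠ 0, the quantities θ_k := C(λ_k)/(|g|·A′(λ_k)) satisfy θ_k = φ_k/m + f_k(λ_1,…,λ_n). (This is the spinless case of the generalized Sklyanin formula: the variables θ_k = s(λ_k) with s(z) = C(z)/(|g|A′(z)) differ from φ_k/m only by a function of the λ's.) -/

import Mathlib

open Matrix BigOperators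

noncomputable section

/-- The block matrix `L̃` with diagonal blocks `Λ = diag(λ₁,…,λₙ)` at positions `(h, h+1)`:
its entry in row `(h,j)` and column `(i,k)` is `λⱼ` if `k = j` and `i = h + 1` in `ℤ/mℤ`,
and `0` otherwise. -/
def Ltilde (m n : ℕ) (lam : Fin n → ℂ) :
    Matrix (ZMod m × Fin n) (ZMod m × Fin n) ℂ :=
  Matrix.of fun p q => if q.2 = p.2 ∧ q.1 = p.1 + 1 then lam p.2 else 0

/-- `|g| = g₀ + g₁ + ⋯ + g_{m-1}`. -/
def gAbs (m : ℕ) (g : ZMod m → ℂ) : ℂ :=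
  ∑ s ∈ Finset.range m, g (s : ZMod m)

/-- `cᵢ = Σ_{r=0}^{i} g_r − Σ_{s=0}^{m−1} ((m−s)/m)·g_s`, the index `i` read modulo `m`. -/
def cConst (m : ℕ) (g : ZMod m → ℂ) (i : ZMod m) : ℂ :=
  (∑ r ∈ Finset.range (i.val + 1), g (r : ZMod m)) -
    ∑ s ∈ Finset.range m, (((m : ℂ) - (s : ℂ)) / (m : ℂ)) * g (s : ZMod m)

/-- The (spinless) matrix `Q̃`: its entry in row `(h,j)` and column `(i,k)` vanishes unless
`h = i + 1` in `ℤ/mℤ`, in which case it equals `φⱼ + cᵢ/λⱼ` if `k = j`, and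
`−|g|·λⱼ^{m−i−1}·λₖ^{i}/(λⱼ^m − λₖ^m)` if `k ≠ j` (where `i` is taken as its representative
in `{0,…,m−1}`). -/
def Qtilde (m n : ℕ) (g : ZMod m → ℂ) (lam phi : Fin n → ℂ) :
    Matrix (ZMod m × Fin n) (ZMod m × Fin n) ℂ :=
  Matrix.of fun p q =>
    if p.1 = q.1 + 1 then
      if q.2 = p.2 then phi p.2 + cConst m g q.1 / lam p.2
      else -(gAbs m g) * lam p.2 ^ (m - q.1.val - 1) * lam q.2 ^ q.1.val /
        (lam p.2 ^ m - lam q.2 ^ m)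
    else 0

/-- `A(z) = det(z·1 − L̃)`. -/
def Afun (m n : ℕ) [NeZero m] (lam : Fin n → ℂ) (z : ℂ) : ℂ :=
  (z • (1 : Matrix (ZMod m × Fin n) (ZMod m × Fin n) ℂ) - Ltilde m n lam).det

/-- `D(z) = tr(Q̃ · adj(z·1 − L̃))`. -/
def Dfun (m n : ℕ) [NeZero m] (g : ZMod m → ℂ) (lam phi : Fin n → ℂ) (z : ℂ) : ℂ :=
  Matrix.trace (Qtilde m n g lam phi *
    (z • (1 : Matrix (ZMod m × Fin n) (ZMod m × Fin n) ℂ) - Ltilde m n lam).adjugate)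

/-- `C(z) = w̃ · Q̃ · adj(z·1 − L̃) · ṽ`, where `ṽ` has entry `1` at each index `(0,j)` and `0`
elsewhere, and `w̃` has entry `|g|` at each index `(0,j)` and `0` elsewhere. -/
def Cfun (m n : ℕ) [NeZero m] (g : ZMod m → ℂ) (lam phi : Fin n → ℂ) (z : ℂ) : ℂ :=
  (fun p : ZMod m × Fin n => if p.1 = 0 then gAbs m g else 0) ⬝ᵥ
    ((Qtilde m n g lam phi *
        (z • (1 : Matrix (ZMod m × Fin n) (ZMod m × Fin n) ℂ) - Ltilde m n lam).adjugate) *ᵥ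
      fun p : ZMod m × Fin n => if p.1 = 0 then (1 : ℂ) else 0)


namespace SklyAux

open Polynomial


/-- single cyclic block -/
def Tblk (m : ℕ) {n : ℕ} (lam : Fin n → ℂ) (j : Fin n) : Matrix (ZMod m) (ZMod m) ℂ :=
  Matrix.of fun h i => if i = h + 1 then lam j else 0

theorem Tblk_pow (m : ℕ) [NeZero m] {n : ℕ} (lam : Fin n → ℂ) (j : Fin n) (t : ℕ) :
    (Tblk m lam j) ^ t = Matrix.of fun h i => if i = h + (t : ZMod m) then lam j ^ t else 0 := by
  induction t with
  | zero => ext h i; simp [Matrix.one_apply, eq_comm]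
  | succ t ih =>
    ext h i
    rw [pow_succ, ih]
    simp only [Matrix.mul_apply, Matrix.of_apply, Tblk]
    rw [Finset.sum_eq_single (h + (t : ZMod m))]
    · have : ((t + 1 : ℕ) : ZMod m) = (t : ZMod m) + 1 := by push_cast; ring
      rw [this, if_pos rfl, ← add_assoc]
      by_cases hi : i = h + (t : ZMod m) + 1
      · rw [if_pos hi, if_pos hi, pow_succ]
      · rw [if_neg hi, if_neg hi, mul_zero]
    · intro b _ hb; rw [if_neg hb, zero_mul]
    · simp

theorem charpoly_Tblk (m : ℕ) [NeZero m] {n : ℕ} (lam : Fin n → ℂ) (j : Fin n)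
    (hl : lam j ≠ 0) :
    (Tblk m lam j).charpoly = X ^ m - C (lam j ^ m) := by
  have hm : 0 < m := Nat.pos_of_ne_zero (NeZero.ne m)
  set p := (Tblk m lam j).charpoly with hp
  have hdeg : p.natDegree = m := by
    rw [hp, Matrix.charpoly_natDegree_eq_dim, ZMod.card]
  have hmon : p.Monic := Matrix.charpoly_monic _
  have hCH : (Polynomial.aeval (Tblk m lam j)) p = 0 := Matrix.aeval_self_charpoly _
  rw [Polynomial.aeval_eq_sum_range, hdeg] at hCH
  have key : ∀ a : ℕ, a < m →
      (∑ i ∈ Finset.range (m + 1),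
        p.coeff i * (if ((a : ZMod m) = ((0 : ZMod m) + (i : ℕ)) ) then lam j ^ i else 0)) = 0 := by
    intro a _
    have h2 := congrArg (fun M : Matrix (ZMod m) (ZMod m) ℂ => M 0 ((a : ℕ) : ZMod m)) hCH
    simpa [Matrix.sum_apply, Tblk_pow, Matrix.smul_apply, smul_eq_mul] using h2
  have hc : ∀ a : ℕ, 0 < a → a < m → p.coeff a = 0 := by
    intro a ha ham
    have h3 := key a ham
    rw [Finset.sum_eq_single a] at h3
    · rw [zero_add, if_pos rfl] at h3
      exact (mul_eq_zero.mp h3).resolve_right (pow_ne_zero _ hl)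
    · intro b hb hba
      rw [zero_add, if_neg, mul_zero]
      intro hcast
      rcases Nat.lt_succ_iff_lt_or_eq.mp (Finset.mem_range.mp hb) with hbm | rfl
      · exact hba ((ZMod.val_cast_of_lt hbm ▸ ZMod.val_cast_of_lt ham ▸
          congrArg ZMod.val hcast).symm ▸ rfl)
      · rw [ZMod.natCast_self] at hcast
        have : a = 0 := by
          have := congrArg ZMod.val hcast
          rwa [ZMod.val_cast_of_lt ham, ZMod.val_zero] at this
        omega
    · intro h; exact absurd (Finset.mem_range.mpr (by omega)) h
  have hcm : p.coeff m = 1 := by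
    have := hmon.leadingCoeff
    rwa [Polynomial.leadingCoeff, hdeg] at this
  have hc0 : p.coeff 0 = - lam j ^ m := by
    have h3 := key 0 hm
    rw [Finset.sum_range_succ, hcm, one_mul, if_pos (by simp), Finset.sum_eq_single 0] at h3
    · rw [if_pos (by simp), pow_zero, mul_one] at h3
      exact eq_neg_of_add_eq_zero_left h3
    · intro b hb hb0
      rw [if_neg, mul_zero]
      intro hcast
      have hbm : b < m := Finset.mem_range.mp hb
      apply hb0
      rw [Nat.cast_zero, zero_add] at hcast
      have := congrArg ZMod.val hcast
      rwa [ZMod.val_zero, ZMod.val_cast_of_lt hbm, eq_comm] at this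
    · intro h; exact absurd (Finset.mem_range.mpr hm) h
  ext i
  rw [coeff_sub, coeff_X_pow, coeff_C]
  rcases lt_trichotomy i m with him | him | hmi
  · rcases Nat.eq_zero_or_pos i with rfl | hi
    · rw [hc0, if_neg (by omega), if_pos rfl]; ring
    · rw [hc i hi him, if_neg (by omega), if_neg (by omega)]; ring
  · subst him; rw [hcm, if_pos rfl, if_neg (by omega)]; ring
  · rw [Polynomial.coeff_eq_zero_of_natDegree_lt (by omega), if_neg (by omega),
      if_neg (by omega)]; ring

theorem zmod_neg_one_val (m : ℕ) [NeZero m] : (-1 : ZMod m).val = m - 1 := by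
  have hm : 0 < m := Nat.pos_of_ne_zero (NeZero.ne m)
  have h1 : (-1 : ZMod m) = ((m - 1 : ℕ) : ZMod m) := by
    rw [Nat.cast_sub (by omega : 1 ≤ m), Nat.cast_one, ZMod.natCast_self]
    ring
  rw [h1, ZMod.val_cast_of_lt (by omega)]

theorem zmod_sub_one_val {m : ℕ} [NeZero m] (a : ZMod m) (ha : a ≠ 0) :
    (a - 1).val = a.val - 1 := by
  have h1 : 1 ≤ a.val := by
    rcases Nat.eq_zero_or_pos a.val with h | h
    · exact absurd ((ZMod.val_eq_zero a).mp h) ha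
    · exact h
  have hlt : a.val - 1 < m := by have := ZMod.val_lt a; omega
  have h2 : a - 1 = ((a.val - 1 : ℕ) : ZMod m) := by
    have ha' : ((a.val : ℕ) : ZMod m) = a := ZMod.natCast_rightInverse a
    rw [Nat.cast_sub h1, Nat.cast_one, ha']
  rw [h2, ZMod.val_cast_of_lt hlt]


theorem Ltilde_eq (m n : ℕ) (lam : Fin n → ℂ) :
    Ltilde m n lam = Matrix.blockDiagonal (fun j => Tblk m lam j) := by
  ext ⟨h, j⟩ ⟨i, k⟩
  simp only [Ltilde, Matrix.of_apply, Matrix.blockDiagonal_apply, Tblk]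
  by_cases hjk : j = k
  · subst hjk; by_cases hi : i = h + 1 <;> simp [hi]
  · simp [hjk, (Ne.symm hjk : k ≠ j)]

theorem charmatrix_Ltilde (m n : ℕ) [NeZero m] (lam : Fin n → ℂ) :
    charmatrix (Ltilde m n lam) = Matrix.blockDiagonal (fun j => charmatrix (Tblk m lam j)) := by
  ext ⟨h, j⟩ ⟨i, k⟩
  by_cases hjk : j = k
  · subst hjk
    simp [charmatrix_apply, Ltilde_eq, Matrix.blockDiagonal_apply, Matrix.diagonal_apply,
      Prod.ext_iff]
  · simp [charmatrix_apply, Ltilde_eq, Matrix.blockDiagonal_apply, Matrix.diagonal_apply,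
      Prod.ext_iff, hjk, (Ne.symm hjk : k ≠ j)]

theorem det_charmatrix_Ltilde (m n : ℕ) [NeZero m] (lam : Fin n → ℂ)
    (hlam : ∀ j, lam j ≠ 0) :
    (charmatrix (Ltilde m n lam)).det = ∏ j : Fin n, (X ^ m - C (lam j ^ m)) := by
  rw [charmatrix_Ltilde, Matrix.det_blockDiagonal]
  refine Finset.prod_congr rfl fun j _ => ?_
  have h1 : (charmatrix (Tblk m lam j)).det = (Tblk m lam j).charpoly := rfl
  rw [h1, charpoly_Tblk m lam j (hlam j)]

theorem charmatrix_map_eval {N : Type*} [DecidableEq N] [Fintype N] (M : Matrix N N ℂ) (z : ℂ) :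
    (charmatrix M).map (Polynomial.eval z) = z • (1 : Matrix N N ℂ) - M := by
  ext p q
  by_cases hpq : p = q
  · subst hpq
    simp [charmatrix_apply_eq, Matrix.one_apply]
  · simp [charmatrix_apply_ne _ _ _ hpq, Matrix.one_apply_ne hpq]

theorem Afun_eq (m n : ℕ) [NeZero m] (lam : Fin n → ℂ) (hlam : ∀ j, lam j ≠ 0) (z : ℂ) :
    Afun m n lam z = ∏ j : Fin n, (z ^ m - lam j ^ m) := by
  have h1 := (Polynomial.evalRingHom z).map_det (charmatrix (Ltilde m n lam))
  rw [det_charmatrix_Ltilde m n lam hlam, RingHom.mapMatrix_apply] at h1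
  have h2 : (charmatrix (Ltilde m n lam)).map (Polynomial.evalRingHom z)
      = z • 1 - Ltilde m n lam := by
    rw [Polynomial.coe_evalRingHom]
    exact charmatrix_map_eval _ z
  rw [h2] at h1
  simp only [Afun]
  rw [← h1, map_prod]
  simp

def Bblk (m : ℕ) {n : ℕ} (lam : Fin n → ℂ) (j : Fin n) : Matrix (ZMod m) (ZMod m) ℂ[X] :=
  Matrix.of fun h i => X ^ (m - 1 - (i - h).val) * C (lam j ^ (i - h).val)

theorem charmatrix_Tblk_mul_Bblk (m : ℕ) [NeZero m] {n : ℕ} (lam : Fin n → ℂ) (j : Fin n) :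
    charmatrix (Tblk m lam j) * Bblk m lam j = (X ^ m - C (lam j ^ m)) • 1 := by
  have hm : 0 < m := Nat.pos_of_ne_zero (NeZero.ne m)
  ext h i
  rw [Matrix.mul_apply]
  have hterm : ∀ b : ZMod m, charmatrix (Tblk m lam j) h b * Bblk m lam j b i
      = (if h = b then X * Bblk m lam j b i else 0)
        - (if b = h + 1 then C (lam j) * Bblk m lam j b i else 0) := by
    intro b
    rw [charmatrix_apply, Matrix.diagonal_apply]
    show ((if h = b then X else 0) - C (if b = h + 1 then lam j else 0)) * _ = _
    rw [sub_mul, apply_ite C, map_zero, ite_mul, ite_mul, zero_mul]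
  rw [Finset.sum_congr rfl fun b _ => hterm b, Finset.sum_sub_distrib,
    Finset.sum_ite_eq, Finset.sum_ite_eq', if_pos (Finset.mem_univ _),
    if_pos (Finset.mem_univ _)]
  by_cases hih : i = h
  · subst hih
    have e0 : (i - i : ZMod m) = 0 := sub_self i
    have e1 : (i - (i + 1) : ZMod m) = -1 := by ring
    simp only [Bblk, Matrix.of_apply]
    rw [e0, e1, zmod_neg_one_val, ZMod.val_zero, Matrix.smul_apply, Matrix.one_apply_eq,
      smul_eq_mul, mul_one]
    rw [Nat.sub_zero, Nat.sub_self, pow_zero, pow_zero, _root_.map_one, mul_one, one_mul]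
    have eX : (X : ℂ[X]) * X ^ (m - 1) = X ^ m := by
      rw [← pow_succ']; congr 1; omega
    have eC : C (lam j) * C (lam j ^ (m - 1)) = C (lam j ^ m) := by
      rw [← _root_.map_mul, ← pow_succ']; congr 2; omega
    rw [eX, eC]
  · have hsub : (i - h : ZMod m) ≠ 0 := sub_ne_zero.mpr hih
    have ht1 : 1 ≤ (i - h : ZMod m).val :=
      Nat.pos_of_ne_zero fun h0 => hsub ((ZMod.val_eq_zero _).mp h0)
    have ht2 : (i - h : ZMod m).val < m := ZMod.val_lt _
    have e1 : (i - (h + 1) : ZMod m) = (i - h) - 1 := by ring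
    simp only [Bblk, Matrix.of_apply]
    rw [e1, zmod_sub_one_val _ hsub, Matrix.smul_apply,
      Matrix.one_apply_ne (fun heq : h = i => hih heq.symm), smul_zero]
    set t := (i - h : ZMod m).val with htdef
    have eE : m - 1 - (t - 1) = m - t := by omega
    have eX : (X : ℂ[X]) * (X ^ (m - 1 - t) * C (lam j ^ t)) = X ^ (m - t) * C (lam j ^ t) := by
      rw [← mul_assoc, ← pow_succ']; congr 2; omega
    have eC : C (lam j) * (X ^ (m - t) * C (lam j ^ (t - 1))) = X ^ (m - t) * C (lam j ^ t) := by
      rw [show lam j ^ t = lam j * lam j ^ (t - 1) from by rw [← pow_succ']; congr 1; omega,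
        _root_.map_mul]
      ring
    rw [eE, eX, eC, sub_self]

def BP (m n : ℕ) [NeZero m] (lam : Fin n → ℂ) :
    Matrix (ZMod m × Fin n) (ZMod m × Fin n) ℂ[X] :=
  Matrix.blockDiagonal fun j =>
    (∏ j' ∈ Finset.univ.erase j, (X ^ m - C (lam j' ^ m))) • Bblk m lam j

theorem charmatrix_mul_BP (m n : ℕ) [NeZero m] (lam : Fin n → ℂ) :
    charmatrix (Ltilde m n lam) * BP m n lam
      = (∏ j : Fin n, (X ^ m - C (lam j ^ m))) • 1 := by
  rw [charmatrix_Ltilde, BP, ← Matrix.blockDiagonal_mul]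
  have hblk : (fun j => charmatrix (Tblk m lam j) *
      ((∏ j' ∈ Finset.univ.erase j, (X ^ m - C (lam j' ^ m))) • Bblk m lam j))
      = fun _ : Fin n => (∏ j' : Fin n, (X ^ m - C (lam j' ^ m)))
          • (1 : Matrix (ZMod m) (ZMod m) ℂ[X]) := by
    funext j
    rw [Matrix.mul_smul, charmatrix_Tblk_mul_Bblk, smul_smul,
      Finset.prod_erase_mul _ _ (Finset.mem_univ j)]
  rw [hblk,
    show (fun _ : Fin n => (∏ j' : Fin n, (X ^ m - C (lam j' ^ m)))
        • (1 : Matrix (ZMod m) (ZMod m) ℂ[X]))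
      = (∏ j' : Fin n, (X ^ m - C (lam j' ^ m)))
        • (fun _ : Fin n => (1 : Matrix (ZMod m) (ZMod m) ℂ[X])) from rfl,
    Matrix.blockDiagonal_smul]
  congr 1
  exact Matrix.blockDiagonal_one

theorem adjugate_charmatrix (m n : ℕ) [NeZero m] (lam : Fin n → ℂ)
    (hlam : ∀ j, lam j ≠ 0) :
    (charmatrix (Ltilde m n lam)).adjugate = BP m n lam := by
  have hm : 0 < m := Nat.pos_of_ne_zero (NeZero.ne m)
  set M := charmatrix (Ltilde m n lam) with hM
  have hdet : M.det = ∏ j : Fin n, (X ^ m - C (lam j ^ m)) :=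
    det_charmatrix_Ltilde m n lam hlam
  have h2 : M * (BP m n lam - M.adjugate) = 0 := by
    rw [Matrix.mul_sub, hM, charmatrix_mul_BP, ← hM, Matrix.mul_adjugate, hdet, sub_self]
  have h3 : M.det • (BP m n lam - M.adjugate) = 0 := by
    have : M.adjugate * (M * (BP m n lam - M.adjugate)) = M.det • (BP m n lam - M.adjugate) := by
      rw [← Matrix.mul_assoc, Matrix.adjugate_mul, Matrix.smul_mul, Matrix.one_mul]
    rw [← this, h2, Matrix.mul_zero]
  have hdet0 : M.det ≠ 0 := by
    rw [hdet]
    exact Finset.prod_ne_zero_iff.mpr fun j _ => Polynomial.X_pow_sub_C_ne_zero hm _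
  refine Matrix.ext fun p q => ?_
  have h4 := congrArg (fun A : Matrix (ZMod m × Fin n) (ZMod m × Fin n) ℂ[X] => A p q) h3
  simp only [Matrix.smul_apply, Matrix.sub_apply, Matrix.zero_apply, smul_eq_mul] at h4
  have h5 := (mul_eq_zero.mp h4).resolve_left hdet0
  exact (sub_eq_zero.mp h5).symm

theorem adjugate_eval (m n : ℕ) [NeZero m] (lam : Fin n → ℂ) (hlam : ∀ j, lam j ≠ 0)
    (k : Fin n) :
    (lam k • (1 : Matrix (ZMod m × Fin n) (ZMod m × Fin n) ℂ) - Ltilde m n lam).adjugate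
      = Matrix.of fun p q => if p.2 = k ∧ q.2 = k then
          lam k ^ (m - 1) * ∏ j ∈ Finset.univ.erase k, (lam k ^ m - lam j ^ m) else 0 := by
  have hmap := (Polynomial.evalRingHom (lam k)).map_adjugate (charmatrix (Ltilde m n lam))
  rw [RingHom.mapMatrix_apply, RingHom.mapMatrix_apply, adjugate_charmatrix m n lam hlam] at hmap
  have hcm : (charmatrix (Ltilde m n lam)).map (Polynomial.evalRingHom (lam k))
      = lam k • 1 - Ltilde m n lam := by
    rw [Polynomial.coe_evalRingHom]
    exact charmatrix_map_eval _ _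
  rw [hcm] at hmap
  rw [← hmap, BP, Matrix.blockDiagonal_map _ _ (by simp)]
  ext ⟨h, j⟩ ⟨i, k'⟩
  rw [Matrix.blockDiagonal_apply, Matrix.of_apply]
  by_cases hjk' : j = k'
  · subst hjk'
    rw [if_pos rfl]
    by_cases hjk : j = k
    · subst hjk
      rw [if_pos ⟨rfl, rfl⟩]
      simp only [Matrix.map_apply, Matrix.smul_apply, Bblk, Matrix.of_apply, smul_eq_mul,
        Polynomial.coe_evalRingHom, Polynomial.eval_mul, Polynomial.eval_prod,
        Polynomial.eval_sub, Polynomial.eval_pow, Polynomial.eval_X, Polynomial.eval_C]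
      have ht : (i - h : ZMod m).val < m := ZMod.val_lt _
      set u := (i - h : ZMod m).val with hu
      generalize hA : m - 1 - u = a
      rw [show m - 1 = a + u from by omega, pow_add]
      ring
    · rw [if_neg (fun hand => hjk hand.1)]
      simp only [Matrix.map_apply, Matrix.smul_apply, smul_eq_mul, Polynomial.coe_evalRingHom,
        Polynomial.eval_mul, Polynomial.eval_prod, Polynomial.eval_sub, Polynomial.eval_pow,
        Polynomial.eval_X, Polynomial.eval_C]
      rw [Finset.prod_eq_zero (Finset.mem_erase.mpr ⟨(Ne.symm hjk : k ≠ j), Finset.mem_univ k⟩)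
        (sub_self (lam k ^ m))]
      simp
  · rw [if_neg hjk', if_neg (fun hand : j = k ∧ k' = k => hjk' (hand.1.trans hand.2.symm))]

end SklyAux

/-- Spinless generalized Sklyanin formula: for every `k`,
`C(λₖ) = |g| · A′(λₖ) · (φₖ/m + fₖ)` with
`fₖ = c_{m−1}/(m·λₖ) − (|g|/(m·λₖ))·Σ_{ℓ≠k} λₖ^m/(λ_ℓ^m − λₖ^m)`; in particular, if `|g| ≠ 0`,
then `θₖ := C(λₖ)/(|g|·A′(λₖ))` satisfies `θₖ = φₖ/m + fₖ`. -/
theorem spinless_sklyanin (m n : ℕ) [NeZero m] (hn : 0 < n)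
    (lam phi : Fin n → ℂ) (g : ZMod m → ℂ)
    (hlam : ∀ j, lam j ≠ 0)
    (hsep : ∀ j k : Fin n, j ≠ k → lam j ^ m ≠ lam k ^ m) (k : Fin n) :
    Cfun m n g lam phi (lam k) =
      gAbs m g * deriv (Afun m n lam) (lam k) *
        (phi k / m +
          (cConst m g ((m : ZMod m) - 1) / ((m : ℂ) * lam k) -
            gAbs m g / ((m : ℂ) * lam k) *
              ∑ l ∈ Finset.univ.erase k, lam k ^ m / (lam l ^ m - lam k ^ m))) ∧
    (gAbs m g ≠ 0 →
      Cfun m n g lam phi (lam k) / (gAbs m g * deriv (Afun m n lam) (lam k)) =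
        phi k / m +
          (cConst m g ((m : ZMod m) - 1) / ((m : ℂ) * lam k) -
            gAbs m g / ((m : ℂ) * lam k) *
              ∑ l ∈ Finset.univ.erase k, lam k ^ m / (lam l ^ m - lam k ^ m))) := by
  classical
  have hm : 0 < m := Nat.pos_of_ne_zero (NeZero.ne m)
  have hm0 : (m : ℂ) ≠ 0 := Nat.cast_ne_zero.mpr (by omega)
  have hlk : lam k ≠ 0 := hlam k
  set G := gAbs m g with hG
  set κ := lam k ^ (m - 1) * ∏ j ∈ Finset.univ.erase k, (lam k ^ m - lam j ^ m) with hκ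
  have adjA : (lam k • (1 : Matrix (ZMod m × Fin n) (ZMod m × Fin n) ℂ)
      - Ltilde m n lam).adjugate
      = Matrix.of fun p q => if p.2 = k ∧ q.2 = k then κ else 0 := by
    rw [hκ]; exact SklyAux.adjugate_eval m n lam hlam k
  -- derivative of A at lam k
  have hderiv : deriv (Afun m n lam) (lam k)
      = (m : ℂ) * (lam k ^ (m - 1) * ∏ j ∈ Finset.univ.erase k, (lam k ^ m - lam j ^ m)) := by
    have hAfe : Afun m n lam = fun z => ∏ j : Fin n, (z ^ m - lam j ^ m) :=
      funext fun z => SklyAux.Afun_eq m n lam hlam z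
    rw [hAfe]
    have hder : HasDerivAt (fun z : ℂ => ∏ j : Fin n, (z ^ m - lam j ^ m))
        (∑ j : Fin n, (∏ j' ∈ Finset.univ.erase j, (lam k ^ m - lam j' ^ m)) •
          ((m : ℂ) * lam k ^ (m - 1))) (lam k) :=
      HasDerivAt.fun_finsetProd fun j _ => (hasDerivAt_pow m (lam k)).sub_const _
    rw [hder.deriv, Finset.sum_eq_single k]
    · rw [smul_eq_mul]; ring
    · intro j _ hjk
      rw [Finset.prod_eq_zero
        (Finset.mem_erase.mpr ⟨(Ne.symm hjk : k ≠ j), Finset.mem_univ k⟩)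
        (sub_self (lam k ^ m)), zero_smul]
    · intro hk; exact absurd (Finset.mem_univ k) hk
  -- the product Q * adjugate
  have hQA : Qtilde m n g lam phi *
      ((lam k • (1 : Matrix (ZMod m × Fin n) (ZMod m × Fin n) ℂ) - Ltilde m n lam).adjugate)
      = Matrix.of fun p q =>
          if q.2 = k then κ * ∑ h : ZMod m, Qtilde m n g lam phi p (h, k) else 0 := by
    rw [adjA]
    refine Matrix.ext fun p q => ?_
    rw [Matrix.mul_apply, Matrix.of_apply]
    by_cases hq : q.2 = k
    · rw [if_pos hq]
      have hstep : ∀ r : ZMod m × Fin n,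
          Qtilde m n g lam phi p r *
            (Matrix.of fun p' q' : ZMod m × Fin n => if p'.2 = k ∧ q'.2 = k then κ else 0) r q
          = Qtilde m n g lam phi p r * (if r.2 = k then κ else 0) := by
        intro r
        rw [Matrix.of_apply]
        simp [hq]
      rw [Finset.sum_congr rfl fun r _ => hstep r, Fintype.sum_prod_type]
      have hinner : ∀ h1 : ZMod m,
          (∑ j1 : Fin n, Qtilde m n g lam phi p (h1, j1) *
            (if ((h1, j1) : ZMod m × Fin n).2 = k then κ else 0))
          = Qtilde m n g lam phi p (h1, k) * κ := by
        intro h1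
        rw [Finset.sum_eq_single k]
        · rw [if_pos rfl]
        · intro j1 _ hj1
          rw [if_neg hj1, mul_zero]
        · intro hk; exact absurd (Finset.mem_univ k) hk
      rw [Finset.sum_congr rfl fun h1 _ => hinner h1, ← Finset.sum_mul, mul_comm]
    · rw [if_neg hq]
      refine Finset.sum_eq_zero fun r _ => ?_
      rw [Matrix.of_apply, if_neg fun hand => hq hand.2, mul_zero]
  -- value of Cfun
  have hMV : (Matrix.of fun p q : ZMod m × Fin n =>
        if q.2 = k then κ * ∑ h : ZMod m, Qtilde m n g lam phi p (h, k) else 0) *ᵥ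
        (fun p : ZMod m × Fin n => if p.1 = 0 then (1 : ℂ) else 0)
      = fun p => κ * ∑ h : ZMod m, Qtilde m n g lam phi p (h, k) := by
    funext p
    show (∑ q : ZMod m × Fin n, (Matrix.of fun p' q' : ZMod m × Fin n =>
        if q'.2 = k then κ * ∑ h : ZMod m, Qtilde m n g lam phi p' (h, k) else 0) p q *
        (if q.1 = 0 then (1 : ℂ) else 0)) = _
    rw [Fintype.sum_prod_type, Finset.sum_eq_single (0 : ZMod m)]
    · rw [Finset.sum_eq_single k]
      · rw [Matrix.of_apply, if_pos rfl, if_pos rfl, mul_one]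
      · intro j1 _ hj1
        rw [Matrix.of_apply, if_neg hj1, zero_mul]
      · intro hk; exact absurd (Finset.mem_univ k) hk
    · intro h1 _ hh1
      refine Finset.sum_eq_zero fun j1 _ => ?_
      rw [if_neg hh1, mul_zero]
    · intro h0; exact absurd (Finset.mem_univ (0 : ZMod m)) h0
  have hDP : Cfun m n g lam phi (lam k)
      = G * ∑ j : Fin n, (κ * ∑ h : ZMod m, Qtilde m n g lam phi (0, j) (h, k)) := by
    simp only [Cfun]
    rw [← hG, hQA, hMV]
    show (∑ p : ZMod m × Fin n, (if p.1 = 0 then G else 0) *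
        (κ * ∑ h : ZMod m, Qtilde m n g lam phi p (h, k))) = _
    rw [Fintype.sum_prod_type, Finset.sum_eq_single (0 : ZMod m)]
    · refine (Finset.sum_congr rfl fun j1 _ => ?_).trans (Finset.mul_sum _ _ _).symm
      show (if (0 : ZMod m) = 0 then G else 0) *
          (κ * ∑ h : ZMod m, Qtilde m n g lam phi (0, j1) (h, k))
        = G * (κ * ∑ h : ZMod m, Qtilde m n g lam phi (0, j1) (h, k))
      rw [if_pos rfl]
    · intro h1 _ hh1
      refine Finset.sum_eq_zero fun j1 _ => ?_
      rw [if_neg hh1, zero_mul]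
    · intro h0; exact absurd (Finset.mem_univ (0 : ZMod m)) h0
  -- row sums of Q
  have hrow : ∀ j : Fin n, (∑ h : ZMod m, Qtilde m n g lam phi (0, j) (h, k))
      = Qtilde m n g lam phi (0, j) (-1, k) := by
    intro j
    rw [Finset.sum_eq_single (-1 : ZMod m)]
    · intro h _ hh
      show (if (0 : ZMod m) = h + 1 then _ else 0) = 0
      rw [if_neg]
      intro hc
      exact hh (eq_neg_of_add_eq_zero_left hc.symm)
    · intro h1; exact absurd (Finset.mem_univ _) h1
  have hQdiag : Qtilde m n g lam phi (0, k) (-1, k) = phi k + cConst m g (-1) / lam k := by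
    show (if (0 : ZMod m) = -1 + 1 then _ else 0) = _
    rw [if_pos (by ring), if_pos rfl]
  have hQoff : ∀ j : Fin n, j ≠ k → Qtilde m n g lam phi (0, j) (-1, k)
      = -G * lam k ^ (m - 1) / (lam j ^ m - lam k ^ m) := by
    intro j hjk
    show (if (0 : ZMod m) = -1 + 1 then _ else 0) = _
    rw [if_pos (by ring), if_neg fun hc : k = j => hjk hc.symm, hG,
      SklyAux.zmod_neg_one_val m, show m - (m - 1) - 1 = 0 from by omega, pow_zero, mul_one]
  have hS : (∑ j : Fin n, Qtilde m n g lam phi (0, j) (-1, k))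
      = (phi k + cConst m g (-1) / lam k) +
        ∑ j ∈ Finset.univ.erase k, (-G * lam k ^ (m - 1) / (lam j ^ m - lam k ^ m)) := by
    rw [← Finset.add_sum_erase Finset.univ _ (Finset.mem_univ k), hQdiag]
    congr 1
    exact Finset.sum_congr rfl fun j hj => hQoff j (Finset.mem_erase.mp hj).1
  have hpowm : lam k ^ m = lam k * lam k ^ (m - 1) := by
    rw [← pow_succ']; congr 1; omega
  have hsum2 : (∑ j ∈ Finset.univ.erase k, (-G * lam k ^ (m - 1) / (lam j ^ m - lam k ^ m)))
      = -(G / lam k * ∑ j ∈ Finset.univ.erase k, lam k ^ m / (lam j ^ m - lam k ^ m)) := by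
    rw [Finset.mul_sum, ← Finset.sum_neg_distrib]
    refine Finset.sum_congr rfl fun j hj => ?_
    have hd : lam j ^ m - lam k ^ m ≠ 0 :=
      sub_ne_zero.mpr (hsep j k (Finset.mem_erase.mp hj).1)
    have h1 : G / lam k * (lam k ^ m / (lam j ^ m - lam k ^ m))
        = G * lam k ^ (m - 1) / (lam j ^ m - lam k ^ m) := by
      have h2 : G * lam k ^ m = lam k * (G * lam k ^ (m - 1)) := by
        rw [hpowm]; ring
      rw [div_mul_div_comm, h2, mul_div_mul_left _ _ hlk]
    rw [h1, neg_mul, neg_div]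
  have hidx : ((m : ℕ) : ZMod m) - 1 = (-1 : ZMod m) := by
    rw [ZMod.natCast_self]; ring
  have hmain : Cfun m n g lam phi (lam k) =
      gAbs m g * deriv (Afun m n lam) (lam k) *
        (phi k / m +
          (cConst m g ((m : ZMod m) - 1) / ((m : ℂ) * lam k) -
            gAbs m g / ((m : ℂ) * lam k) *
              ∑ l ∈ Finset.univ.erase k, lam k ^ m / (lam l ^ m - lam k ^ m))) := by
    rw [hDP]
    have hj1 : (∑ j : Fin n, (κ * ∑ h : ZMod m, Qtilde m n g lam phi (0, j) (h, k)))
        = κ * ((phi k + cConst m g (-1) / lam k) +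
          -(G / lam k * ∑ j ∈ Finset.univ.erase k, lam k ^ m / (lam j ^ m - lam k ^ m))) := by
      rw [← Finset.mul_sum]
      congr 1
      rw [Finset.sum_congr rfl fun j _ => hrow j, hS, hsum2]
    rw [hj1, hderiv, hidx, ← hG, hκ]
    field_simp
    ring
  refine ⟨hmain, fun hGne => ?_⟩
  have hAne : deriv (Afun m n lam) (lam k) ≠ 0 := by
    rw [hderiv]
    exact mul_ne_zero hm0 (mul_ne_zero (pow_ne_zero _ hlk)
      (Finset.prod_ne_zero_iff.mpr fun j hj =>
        sub_ne_zero.mpr (hsep k j (Ne.symm (Finset.mem_erase.mp hj).1))))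
  rw [hmain, mul_div_cancel_left₀ _ (mul_ne_zero hGne hAne)]
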